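/- For a lower hyperspace topology T on the powerset of X and an ideal 𝒮, the closure operator cl_𝒮^T equals the composition cl_{τ(𝒮)} ∘ cl^T, i.e., for every collection 𝒜, cl_𝒮^T(𝒜) = cl_{τ(𝒮)}(cl^T(𝒜)). -/

import Mathlib

open Set Topology

def IsIdeal {X : Type*} (𝒮 : Set (Set X)) : Prop :=
  ∅ ∈ 𝒮 ∧ (∀ S ∈ 𝒮, ∀ S' ⊆ S, S' ∈ 𝒮) ∧ (∀ S ∈ 𝒮, ∀ S' ∈ 𝒮, S ∪ S' ∈ 𝒮)

def tauS {X : Type*} (𝒮 : Set (Set X)) : TopologicalSpace (Set X) :=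
  TopologicalSpace.generateFrom
    {U | ∃ S ∈ 𝒮, ∃ S' ∈ 𝒮, U = {C : Set X | S ⊆ C ∧ C ∩ S' = ∅}}

def lowerModCl {X : Type*} (𝒮 : Set (Set X)) (T : TopologicalSpace (Set X))
    (𝒜 : Set (Set X)) : Set (Set X) :=
  {A | ∀ S ∈ 𝒮, S ⊆ A → S ∈ @closure (Set X) T 𝒜}

theorem stmt_13 {X : Type*} (𝒮 : Set (Set X)) (hS : IsIdeal 𝒮)
    (T : TopologicalSpace (Set X))
    (hT : ∀ 𝒢 : Set (Set X), IsOpen[T] 𝒢 → ∀ A ∈ 𝒢, ∀ B : Set X, A ⊆ B → B ∈ 𝒢) :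
    ∀ 𝒜 : Set (Set X),
      lowerModCl 𝒮 T 𝒜 = @closure (Set X) (tauS 𝒮) (@closure (Set X) T 𝒜) := by
  intro 𝒜
  obtain ⟨hempty, hdown, hunion⟩ := hS
  ext A
  simp only [lowerModCl, mem_setOf_eq]
  have key : ∀ o : Set (Set X),
      TopologicalSpace.GenerateOpen
        {U | ∃ S ∈ 𝒮, ∃ S' ∈ 𝒮, U = {C : Set X | S ⊆ C ∧ C ∩ S' = ∅}} o →
      A ∈ o → ∃ S ∈ 𝒮, ∃ S' ∈ 𝒮, (S ⊆ A ∧ A ∩ S' = ∅) ∧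
        {C : Set X | S ⊆ C ∧ C ∩ S' = ∅} ⊆ o := by
    intro o ho
    induction ho with
    | basic U hU =>
      intro hA
      obtain ⟨S, hSmem, S', hS'mem, rfl⟩ := hU
      exact ⟨S, hSmem, S', hS'mem, hA, subset_rfl⟩
    | univ =>
      intro _
      exact ⟨∅, hempty, ∅, hempty, ⟨empty_subset _, by simp⟩, fun _ _ => trivial⟩
    | inter o1 o2 h1 h2 ih1 ih2 =>
      intro hA
      obtain ⟨S1, hm1, S1', hm1', ⟨hs1, hi1⟩, hsub1⟩ := ih1 hA.1
      obtain ⟨S2, hm2, S2', hm2', ⟨hs2, hi2⟩, hsub2⟩ := ih2 hA.2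
      refine ⟨S1 ∪ S2, hunion _ hm1 _ hm2, S1' ∪ S2', hunion _ hm1' _ hm2',
        ⟨union_subset hs1 hs2, ?_⟩, ?_⟩
      · rw [inter_union_distrib_left, hi1, hi2, union_empty]
      · rintro C ⟨hCs, hCi⟩
        rw [inter_union_distrib_left, union_empty_iff] at hCi
        exact ⟨hsub1 ⟨subset_union_left.trans hCs, hCi.1⟩,
          hsub2 ⟨subset_union_right.trans hCs, hCi.2⟩⟩
    | sUnion 𝔖 h ih =>
      intro hA
      obtain ⟨o, ho, hAo⟩ := hA
      obtain ⟨S, hm, S', hm', hA', hsub⟩ := ih o ho hAo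
      exact ⟨S, hm, S', hm', hA', hsub.trans (subset_sUnion_of_mem ho)⟩
  constructor
  · intro h
    rw [@mem_closure_iff _ (tauS 𝒮) _ _]
    intro o ho hAo
    obtain ⟨S, hm, S', hm', ⟨hsA, hiA⟩, hsub⟩ := key o ho hAo
    refine ⟨S, hsub ⟨subset_rfl, ?_⟩, h S hm hsA⟩
    exact eq_empty_of_subset_empty (by rw [← hiA]; exact inter_subset_inter_left _ hsA)
  · intro h S hSm hSA
    rw [@mem_closure_iff _ T _ _]
    intro 𝒢 h𝒢 hS𝒢
    have hbasic : IsOpen[tauS 𝒮] {C : Set X | S ⊆ C ∧ C ∩ (∅ : Set X) = ∅} :=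
      TopologicalSpace.GenerateOpen.basic _ ⟨S, hSm, ∅, hempty, rfl⟩
    obtain ⟨B, ⟨hSB, -⟩, hB⟩ :=
      (@mem_closure_iff _ (tauS 𝒮) _ _).mp h _ hbasic ⟨hSA, inter_empty _⟩
    exact (@mem_closure_iff _ T _ _).mp hB 𝒢 h𝒢 (hT 𝒢 h𝒢 S hS𝒢 B hSB)
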